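/- Fix affine lines in ℂ²: L_1: x = 0, L_3: y = 1, L_4: x + y = 1, K_1: x = 1, K_3: y = 0. Suppose γ ∈ ℂ is such that the line L_2: x = γ(y − 1) and K_2: x = γ y and K_4: x + y = γ + 1 realize the Falk–Sturmfels incidence; then the collinearity of the required triple points forces γ² − γ − 1 = 0, i.e., γ = (1 ± √5)/2. -/
import Mathlib

/-- In the Falk–Sturmfels configuration, the concurrency of the lines
`L₂ : x = γ(y-1)`, `K₁ : x = 1` and `K₄ : x + y = γ + 1` (required by the
incidence) forces `γ² - γ - 1 = 0`. -/
theorem falk_sturmfels_forces_golden (γ : ℂ)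
    (h : ∃ x y : ℂ, x = γ * (y - 1) ∧ x = 1 ∧ x + y = γ + 1) :
    γ ^ 2 - γ - 1 = 0 := by
  obtain ⟨x, y, h1, h2, h3⟩ := h
  subst h2
  have hy : y = γ := by linear_combination h3
  subst hy
  linear_combination -h1
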